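/- Let I, J, K, R be positive integers with I, J, K ≥ 2, and let ℓ = IJK − I − J − K + 2. Define Φ : ℝ^I × ℝ^J × ℝ^K → ℝ^ℓ by writing x = (x₁, x₂) with x₁ ∈ ℝ, x₂ ∈ ℝ^{I−1}, y = (y₁, y₂) with y₂ ∈ ℝ^{J−1}, z = (z₁, z₂) with z₂ ∈ ℝ^{K−1}, and setting Φ(x, y, z) to be the concatenation of the four blocks z₁·(y₂ ⊗ x₂) ∈ ℝ^{(J−1)(I−1)}, x₁·(z₂ ⊗ y₂) ∈ ℝ^{(K−1)(J−1)}, y₁·(z₂ ⊗ x₂) ∈ ℝ^{(K−1)(I−1)}, and z₂ ⊗ y₂ ⊗ x₂ ∈ ℝ^{(K−1)(J−1)(I−1)}. Then the set of triples of matrices (X, Y, Z) ∈ ℝ^{I×R} × ℝ^{J×R} × ℝ^{K×R}, with columns x_r, y_r, z_r, for which the ℓ × R matrix [Φ(x₁,y₁,z₁), …, Φ(x_R,y_R,z_R)] does not have rank min(ℓ, R) has Lebesgue measure zero. -/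

import Mathlib

/-- The map `Φ : ℝ^I × ℝ^J × ℝ^K → ℝ^{IJK-I-J-K+2}` of Lemma 2.2(ii): writing
`x = (x₁, x₂)`, `y = (y₁, y₂)`, `z = (z₁, z₂)` with `x₂ ∈ ℝ^{I-1}`, `y₂ ∈ ℝ^{J-1}`,
`z₂ ∈ ℝ^{K-1}`, its four blocks are `z₁·(y₂ ⊗ x₂)`, `x₁·(z₂ ⊗ y₂)`, `y₁·(z₂ ⊗ x₂)`
and `z₂ ⊗ y₂ ⊗ x₂`.  The codomain is indexed by a sum type of cardinality
`(J-1)(I-1) + (K-1)(J-1) + (K-1)(I-1) + (K-1)(J-1)(I-1) = IJK - I - J - K + 2`. -/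
def PhiMap (I J K : ℕ) (hI : 2 ≤ I) (hJ : 2 ≤ J) (hK : 2 ≤ K)
    (x : Fin I → ℝ) (y : Fin J → ℝ) (z : Fin K → ℝ) :
    ((Fin (J - 1) × Fin (I - 1)) ⊕
      ((Fin (K - 1) × Fin (J - 1)) ⊕
        ((Fin (K - 1) × Fin (I - 1)) ⊕ (Fin (K - 1) × Fin (J - 1) × Fin (I - 1))))) → ℝ :=
  fun idx =>
    match idx with
    | Sum.inl (j, i) =>
        z ⟨0, by omega⟩ *
          (y ⟨j.val + 1, by have := j.isLt; omega⟩ * x ⟨i.val + 1, by have := i.isLt; omega⟩)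
    | Sum.inr (Sum.inl (k, j)) =>
        x ⟨0, by omega⟩ *
          (z ⟨k.val + 1, by have := k.isLt; omega⟩ * y ⟨j.val + 1, by have := j.isLt; omega⟩)
    | Sum.inr (Sum.inr (Sum.inl (k, i))) =>
        y ⟨0, by omega⟩ *
          (z ⟨k.val + 1, by have := k.isLt; omega⟩ * x ⟨i.val + 1, by have := i.isLt; omega⟩)
    | Sum.inr (Sum.inr (Sum.inr (k, j, i))) =>
        z ⟨k.val + 1, by have := k.isLt; omega⟩ *
          (y ⟨j.val + 1, by have := j.isLt; omega⟩ * x ⟨i.val + 1, by have := i.isLt; omega⟩)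

namespace PhiAux

open MeasureTheory MvPolynomial

/-! ### Currying is measure preserving -/

def mcurry (n : ℕ) (β : Type) [MeasurableSpace β] :
    ((Fin n × β) → ℝ) ≃ᵐ (Fin n → β → ℝ) where
  toFun f a b := f (a, b)
  invFun g p := g p.1 p.2
  left_inv f := rfl
  right_inv g := rfl
  measurable_toFun := by
    apply measurable_pi_lambda; intro a
    apply measurable_pi_lambda; intro b
    exact measurable_pi_apply _
  measurable_invFun := by
    apply measurable_pi_lambda; intro p
    exact (measurable_pi_apply p.2).comp (measurable_pi_apply p.1)

def peel (n : ℕ) (β : Type) : (β ⊕ (Fin n × β)) ≃ (Fin (n + 1) × β) where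
  toFun s := Sum.rec (fun b => (0, b)) (fun p => (p.1.succ, p.2)) s
  invFun p := Fin.cases (Sum.inl p.2) (fun i => Sum.inr (i, p.2)) p.1
  left_inv s := by rcases s with b | ⟨i, b⟩ <;> simp
  right_inv p := by
    obtain ⟨a, b⟩ := p
    induction a using Fin.cases <;> simp

lemma mcurry_mp (n : ℕ) (β : Type) [MeasurableSpace β] [Fintype β]
    (μ : Measure ℝ) [SigmaFinite μ] :
    MeasurePreserving (mcurry n β) (Measure.pi fun _ => μ)
      (Measure.pi fun _ => Measure.pi fun _ => μ) := by
  induction n with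
  | zero =>
      refine ⟨(mcurry 0 β).measurable, ?_⟩
      rw [Measure.pi_of_empty (fun _ : Fin 0 × β => μ),
        Measure.map_dirac' (mcurry 0 β).measurable,
        Measure.pi_of_empty (fun _ : Fin 0 => Measure.pi fun _ : β => μ)]
      congr 1
      exact Subsingleton.elim _ _
  | succ n ih =>
      set g1 := (MeasurableEquiv.piCongrLeft (fun _ : Fin (n+1) × β => ℝ) (peel n β)).symm
      have h1 : MeasurePreserving g1 (Measure.pi fun _ => μ)
          (Measure.pi fun _ : β ⊕ (Fin n × β) => μ) :=
        (measurePreserving_piCongrLeft (fun _ => μ) (peel n β)).symm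
      set g2 := MeasurableEquiv.sumPiEquivProdPi (fun _ : β ⊕ (Fin n × β) => ℝ)
      have h2 : MeasurePreserving g2 (Measure.pi fun _ => μ)
          ((Measure.pi fun _ : β => μ).prod (Measure.pi fun _ : Fin n × β => μ)) :=
        measurePreserving_sumPiEquivProdPi _
      set g3 := Prod.map (id : (β → ℝ) → (β → ℝ)) (mcurry n β)
      have h3 : MeasurePreserving g3
          ((Measure.pi fun _ : β => μ).prod (Measure.pi fun _ : Fin n × β => μ))
          ((Measure.pi fun _ : β => μ).prod
            (Measure.pi fun _ : Fin n => Measure.pi fun _ : β => μ)) :=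
        (MeasurePreserving.id _).prod ih
      set g4 := (MeasurableEquiv.piFinSuccAbove (fun _ : Fin (n+1) => (β → ℝ)) 0).symm
      have h4 : MeasurePreserving g4
          ((Measure.pi fun _ : β => μ).prod
            (Measure.pi fun _ : Fin n => Measure.pi fun _ : β => μ))
          (Measure.pi fun _ : Fin (n+1) => Measure.pi fun _ : β => μ) :=
        (measurePreserving_piFinSuccAbove (fun _ : Fin (n+1) => Measure.pi fun _ : β => μ) 0).symm
      have hcomp := h4.comp (h3.comp (h2.comp h1))
      have hfun : ⇑(mcurry (n+1) β) = ⇑g4 ∘ g3 ∘ ⇑g2 ∘ ⇑g1 := by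
        funext f
        ext a b
        simp only [Function.comp_apply, mcurry, MeasurableEquiv.coe_mk, Equiv.coe_fn_mk,
          g1, g2, g3, g4]
        induction a using Fin.cases with
        | zero => simp [MeasurableEquiv.piFinSuccAbove, MeasurableEquiv.sumPiEquivProdPi,
            Equiv.sumPiEquivProdPi, MeasurableEquiv.piCongrLeft, Equiv.piCongrLeft, peel]
        | succ i => simp [MeasurableEquiv.piFinSuccAbove, MeasurableEquiv.sumPiEquivProdPi,
            Equiv.sumPiEquivProdPi, MeasurableEquiv.piCongrLeft, Equiv.piCongrLeft, peel,
            Fin.succAbove]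
      rw [show (mcurry (n+1) β : ((Fin (n+1) × β) → ℝ) → (Fin (n+1) → β → ℝ))
        = ⇑g4 ∘ g3 ∘ ⇑g2 ∘ ⇑g1 from hfun] at *
      exact hcomp

lemma mcurry_vol (n : ℕ) (β : Type) [MeasurableSpace β] [Fintype β] :
    MeasurePreserving (mcurry n β) volume volume := mcurry_mp n β volume

/-! ### Zero sets of nonzero polynomials are null -/

lemma cont_eval {σ : Type*} (p : MvPolynomial σ ℝ) :
    Continuous fun u : σ → ℝ => eval u p := MvPolynomial.continuous_eval (p := p)

lemma mvpoly_zero_fin (n : ℕ) (p : MvPolynomial (Fin n) ℝ)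
    (h : ∃ u, eval u p ≠ 0) :
    (Measure.pi fun _ : Fin n => (volume : Measure ℝ)) {u | eval u p = 0} = 0 := by
  induction n with
  | zero =>
      obtain ⟨u₀, hu₀⟩ := h
      have : {u : Fin 0 → ℝ | eval u p = 0} = ∅ := by
        ext u
        simp only [Set.mem_setOf_eq, Set.mem_empty_iff_false, iff_false]
        have : u = u₀ := Subsingleton.elim _ _
        rw [this]; exact hu₀
      simp [this]
  | succ n ih =>
      set q := finSuccEquiv ℝ n p with hq
      obtain ⟨u₀, hu₀⟩ := h
      have hkey : ∀ (w : Fin (n+1) → ℝ),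
          eval w p = Polynomial.eval (w 0) ((q.map (eval (Fin.tail w)))) := by
        intro w
        conv_lhs => rw [← Fin.cons_self_tail w]
        rw [eval_eq_eval_mv_eval']
      have hgne : (q.map (eval (Fin.tail u₀))) ≠ 0 := by
        intro hcontra
        rw [hkey, hcontra] at hu₀
        simp at hu₀
      have hex : ∃ i, (q.map (eval (Fin.tail u₀))).coeff i ≠ 0 := by
        by_contra hc
        push_neg at hc
        exact hgne (Polynomial.ext fun m => by simpa using hc m)
      obtain ⟨i, hi⟩ := hex
      have hi' : eval (Fin.tail u₀) (q.coeff i) ≠ 0 := by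
        rwa [Polynomial.coeff_map] at hi
      have hT := ih (q.coeff i) ⟨_, hi'⟩
      set φ := MeasurableEquiv.piFinSuccAbove (fun _ : Fin (n+1) => ℝ) 0
      have hφ : MeasurePreserving φ (Measure.pi fun _ => volume)
          ((volume : Measure ℝ).prod (Measure.pi fun _ : Fin n => volume)) :=
        measurePreserving_piFinSuccAbove (fun _ => volume) 0
      have hScont : Continuous fun ys : ℝ × (Fin n → ℝ) => eval (Fin.cons ys.1 ys.2) p := by
        apply (cont_eval p).comp
        apply continuous_pi
        intro a
        induction a using Fin.cases with
        | zero => simpa using continuous_fst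
        | succ j => simpa using (by fun_prop :
            Continuous fun a : ℝ × (Fin n → ℝ) => a.2 j)
      set S' : Set (ℝ × (Fin n → ℝ)) := {ys | eval (Fin.cons ys.1 ys.2) p = 0} with hS'
      have hS'meas : MeasurableSet S' := (isClosed_eq hScont continuous_const).measurableSet
      have hpre : {u : Fin (n+1) → ℝ | eval u p = 0} = φ ⁻¹' S' := by
        ext w
        simp only [Set.mem_setOf_eq, Set.mem_preimage, hS']
        have hφw : φ w = (w 0, Fin.tail w) := by
          simp [φ, MeasurableEquiv.piFinSuccAbove, Fin.tail, Fin.succAbove]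
        rw [hφw]
        simp only [Set.mem_setOf_eq]
        rw [Fin.cons_self_tail]
      rw [hpre, hφ.measure_preimage hS'meas.nullMeasurableSet]
      rw [Measure.prod_apply_symm hS'meas]
      have hae : ∀ᵐ s ∂(Measure.pi fun _ : Fin n => (volume : Measure ℝ)),
          (volume : Measure ℝ) ((fun y => (y, s)) ⁻¹' S') = 0 := by
        have hTc : ∀ s : Fin n → ℝ, eval s (q.coeff i) ≠ 0 →
            (volume : Measure ℝ) ((fun y => (y, s)) ⁻¹' S') = 0 := by
          intro s hs
          have hgs : (q.map (eval s)) ≠ 0 := by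
            intro hc
            apply hs
            have := congrArg (fun r => Polynomial.coeff r i) hc
            simpa [Polynomial.coeff_map] using this
          have hset : ((fun y => (y, s)) ⁻¹' S') = {y | Polynomial.IsRoot (q.map (eval s)) y} := by
            ext y
            simp only [Set.mem_preimage, hS', Set.mem_setOf_eq, Polynomial.IsRoot]
            rw [← eval_eq_eval_mv_eval']
          rw [hset]
          exact (Polynomial.finite_setOf_isRoot hgs).measure_zero _
        have hTnull : (Measure.pi fun _ : Fin n => (volume : Measure ℝ))
            {s | eval s (q.coeff i) = 0} = 0 := hT
        filter_upwards [measure_eq_zero_iff_ae_notMem.mp hTnull] with s hs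
        exact hTc s hs
      rw [lintegral_congr_ae (hae.mono fun s hs => hs), lintegral_zero]

lemma mvpoly_zero {σ : Type*} [Fintype σ] (p : MvPolynomial σ ℝ)
    (h : ∃ u, eval u p ≠ 0) :
    (Measure.pi fun _ : σ => (volume : Measure ℝ)) {u | eval u p = 0} = 0 := by
  set n := Fintype.card σ
  set e : σ ≃ Fin n := Fintype.equivFin σ
  set q := rename e p with hqdef
  set φ := MeasurableEquiv.piCongrLeft (fun _ : Fin n => ℝ) e with hφdef
  have hφapp : ∀ (u : σ → ℝ) (b : Fin n), φ u b = u (e.symm b) := by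
    intro u b
    rw [hφdef]
    rw [MeasurableEquiv.coe_piCongrLeft]
    simp [Equiv.piCongrLeft_apply, eq_rec_constant]
  have hqev : ∀ u : σ → ℝ, eval (φ u) q = eval u p := by
    intro u
    rw [hqdef, eval_rename]
    have hcomp : φ u ∘ e = u := funext fun s => by simp [hφapp]
    rw [hcomp]
  have hφ : MeasurePreserving φ (Measure.pi fun _ : σ => (volume : Measure ℝ))
      (Measure.pi fun _ : Fin n => volume) :=
    measurePreserving_piCongrLeft (fun _ => volume) e
  obtain ⟨u, hu⟩ := h
  have hz := mvpoly_zero_fin n q ⟨φ u, by rw [hqev]; exact hu⟩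
  have hmeas : MeasurableSet {v : Fin n → ℝ | eval v q = 0} :=
    (isClosed_eq (cont_eval q) continuous_const).measurableSet
  have hpre : {u : σ → ℝ | eval u p = 0} = φ ⁻¹' {v | eval v q = 0} := by
    ext u
    simp only [Set.mem_setOf_eq, Set.mem_preimage, hqev]
  rw [hpre, hφ.measure_preimage hmeas.nullMeasurableSet]
  exact hz

/-! ### Index bookkeeping -/

abbrev LIdx (I J K : ℕ) := ((Fin (J - 1) × Fin (I - 1)) ⊕
      ((Fin (K - 1) × Fin (J - 1)) ⊕
        ((Fin (K - 1) × Fin (I - 1)) ⊕ (Fin (K - 1) × Fin (J - 1) × Fin (I - 1)))))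

lemma card_LIdx (I J K : ℕ) (hI : 2 ≤ I) (hJ : 2 ≤ J) (hK : 2 ≤ K) :
    Fintype.card (LIdx I J K) = I * J * K - I - J - K + 2 := by
  obtain ⟨a, rfl⟩ : ∃ a, I = a + 2 := ⟨I - 2, by omega⟩
  obtain ⟨b, rfl⟩ : ∃ b, J = b + 2 := ⟨J - 2, by omega⟩
  obtain ⟨c, rfl⟩ : ∃ c, K = c + 2 := ⟨K - 2, by omega⟩
  have h1 : a + 2 - 1 = a + 1 := by omega
  have h2 : b + 2 - 1 = b + 1 := by omega
  have h3 : c + 2 - 1 = c + 1 := by omega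
  simp only [LIdx, Fintype.card_sum, Fintype.card_prod, Fintype.card_fin, h1, h2, h3]
  have key : (a + 2) * (b + 2) * (c + 2) =
      (b + 1) * (a + 1) + ((c + 1) * (b + 1) + ((c + 1) * (a + 1) +
        (c + 1) * ((b + 1) * (a + 1)))) + (a + b + c + 4) := by ring
  have p1 : 0 < (b + 1) * (a + 1) := by positivity
  have p2 : 0 < (c + 1) * (b + 1) := by positivity
  have p3 : 0 < (c + 1) * (a + 1) := by positivity
  have p4 : 0 < (c + 1) * ((b + 1) * (a + 1)) := by positivity
  rw [key]; omega

/-! ### Basis-vector witnesses for `Φ` -/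

def w (I J K : ℕ) (b : LIdx I J K) :
    (Fin I → ℝ) × (Fin J → ℝ) × (Fin K → ℝ) :=
  match b with
  | Sum.inl (j, i) =>
      (fun i' => if i'.val = i.val + 1 then 1 else 0,
       fun j' => if j'.val = j.val + 1 then 1 else 0,
       fun k' => if k'.val = 0 then 1 else 0)
  | Sum.inr (Sum.inl (k, j)) =>
      (fun i' => if i'.val = 0 then 1 else 0,
       fun j' => if j'.val = j.val + 1 then 1 else 0,
       fun k' => if k'.val = k.val + 1 then 1 else 0)
  | Sum.inr (Sum.inr (Sum.inl (k, i))) =>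
      (fun i' => if i'.val = i.val + 1 then 1 else 0,
       fun j' => if j'.val = 0 then 1 else 0,
       fun k' => if k'.val = k.val + 1 then 1 else 0)
  | Sum.inr (Sum.inr (Sum.inr (k, j, i))) =>
      (fun i' => if i'.val = i.val + 1 then 1 else 0,
       fun j' => if j'.val = j.val + 1 then 1 else 0,
       fun k' => if k'.val = k.val + 1 then 1 else 0)

lemma phi_w (I J K : ℕ) (hI : 2 ≤ I) (hJ : 2 ≤ J) (hK : 2 ≤ K) (b idx : LIdx I J K) :
    PhiMap I J K hI hJ hK (w I J K b).1 (w I J K b).2.1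
      (w I J K b).2.2 idx = if idx = b then 1 else 0 := by
  rcases b with ⟨j, i⟩ | ⟨k, j⟩ | ⟨k, i⟩ | ⟨k, j, i⟩ <;>
    rcases idx with ⟨j', i'⟩ | ⟨k', j'⟩ | ⟨k', i'⟩ | ⟨k', j', i'⟩ <;>
      simp [PhiMap, w, Fin.ext_iff] <;> split_ifs <;> simp_all

lemma phi_zero (I J K : ℕ) (hI : 2 ≤ I) (hJ : 2 ≤ J) (hK : 2 ≤ K) (idx : LIdx I J K) :
    PhiMap I J K hI hJ hK (fun _ => 0) (fun _ => 0) (fun _ => 0) idx = 0 := by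
  rcases idx with ⟨j', i'⟩ | ⟨k', j'⟩ | ⟨k', i'⟩ | ⟨k', j', i'⟩ <;> simp [PhiMap]

/-! ### Flattening the parameter space -/

abbrev FlatIdx (I J K R : ℕ) := ((Fin I × Fin R) ⊕ ((Fin J × Fin R) ⊕ (Fin K × Fin R)))

def flatE (I J K R : ℕ) :
    ((FlatIdx I J K R) → ℝ) ≃ᵐ
      ((Fin I → Fin R → ℝ) × (Fin J → Fin R → ℝ) × (Fin K → Fin R → ℝ)) where
  toFun u := (fun i r => u (.inl (i, r)), fun j r => u (.inr (.inl (j, r))),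
    fun k r => u (.inr (.inr (k, r))))
  invFun t := fun s => Sum.rec (fun p => t.1 p.1 p.2)
    (fun s' => Sum.rec (fun p => t.2.1 p.1 p.2) (fun p => t.2.2 p.1 p.2) s') s
  left_inv u := by funext s; rcases s with ⟨i, r⟩ | ⟨j, r⟩ | ⟨k, r⟩ <;> rfl
  right_inv t := rfl
  measurable_toFun := by
    refine Measurable.prodMk ?_ (Measurable.prodMk ?_ ?_) <;>
      (apply measurable_pi_lambda; intro a; apply measurable_pi_lambda; intro r;
        exact measurable_pi_apply _)
  measurable_invFun := by
    apply measurable_pi_lambda; intro s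
    rcases s with ⟨i, r⟩ | ⟨j, r⟩ | ⟨k, r⟩
    · show Measurable fun t : (Fin I → Fin R → ℝ) × (Fin J → Fin R → ℝ) × (Fin K → Fin R → ℝ) =>
        t.1 i r
      exact measurable_fst.eval.eval
    · show Measurable fun t : (Fin I → Fin R → ℝ) × (Fin J → Fin R → ℝ) × (Fin K → Fin R → ℝ) =>
        t.2.1 j r
      exact (measurable_fst.comp measurable_snd).eval.eval
    · show Measurable fun t : (Fin I → Fin R → ℝ) × (Fin J → Fin R → ℝ) × (Fin K → Fin R → ℝ) =>
        t.2.2 k r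
      exact (measurable_snd.comp measurable_snd).eval.eval

lemma flatE_mp (I J K R : ℕ) : MeasurePreserving (flatE I J K R) volume volume := by
  have h1 := volume_measurePreserving_sumPiEquivProdPi (fun _ : FlatIdx I J K R => ℝ)
  have h2 : MeasurePreserving
      (Prod.map (id : ((Fin I × Fin R) → ℝ) → ((Fin I × Fin R) → ℝ))
        (MeasurableEquiv.sumPiEquivProdPi (fun _ : (Fin J × Fin R) ⊕ (Fin K × Fin R) => ℝ)))
      volume volume :=
    (MeasurePreserving.id volume).prod (volume_measurePreserving_sumPiEquivProdPi _)
  have h3 : MeasurePreserving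
      (Prod.map (mcurry I (Fin R)) (Prod.map (mcurry J (Fin R)) (mcurry K (Fin R))))
      volume volume :=
    (mcurry_vol I (Fin R)).prod ((mcurry_vol J (Fin R)).prod (mcurry_vol K (Fin R)))
  have hfun : ⇑(flatE I J K R) =
      (Prod.map (mcurry I (Fin R)) (Prod.map (mcurry J (Fin R)) (mcurry K (Fin R)))) ∘
        (Prod.map id (MeasurableEquiv.sumPiEquivProdPi
          (fun _ : (Fin J × Fin R) ⊕ (Fin K × Fin R) => ℝ))) ∘
          (MeasurableEquiv.sumPiEquivProdPi (fun _ : FlatIdx I J K R => ℝ)) := by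
    funext u; rfl
  rw [hfun]
  exact h3.comp (h2.comp h1)

/-! ### The polynomial matrix -/

noncomputable def Mpoly (I J K R : ℕ) (hI : 2 ≤ I) (hJ : 2 ≤ J) (hK : 2 ≤ K) :
    Matrix (LIdx I J K) (Fin R) (MvPolynomial (FlatIdx I J K R) ℝ) :=
  Matrix.of fun idx r =>
    match idx with
    | Sum.inl (j, i) =>
        X (.inr (.inr (⟨0, by omega⟩, r))) *
          (X (.inr (.inl (⟨j.val + 1, by have := j.isLt; omega⟩, r))) *
            X (.inl (⟨i.val + 1, by have := i.isLt; omega⟩, r)))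
    | Sum.inr (Sum.inl (k, j)) =>
        X (.inl (⟨0, by omega⟩, r)) *
          (X (.inr (.inr (⟨k.val + 1, by have := k.isLt; omega⟩, r))) *
            X (.inr (.inl (⟨j.val + 1, by have := j.isLt; omega⟩, r))))
    | Sum.inr (Sum.inr (Sum.inl (k, i))) =>
        X (.inr (.inl (⟨0, by omega⟩, r))) *
          (X (.inr (.inr (⟨k.val + 1, by have := k.isLt; omega⟩, r))) *
            X (.inl (⟨i.val + 1, by have := i.isLt; omega⟩, r)))
    | Sum.inr (Sum.inr (Sum.inr (k, j, i))) =>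
        X (.inr (.inr (⟨k.val + 1, by have := k.isLt; omega⟩, r))) *
          (X (.inr (.inl (⟨j.val + 1, by have := j.isLt; omega⟩, r))) *
            X (.inl (⟨i.val + 1, by have := i.isLt; omega⟩, r)))

def Mmat (I J K R : ℕ) (hI : 2 ≤ I) (hJ : 2 ≤ J) (hK : 2 ≤ K)
    (t : (Fin I → Fin R → ℝ) × (Fin J → Fin R → ℝ) × (Fin K → Fin R → ℝ)) :
    Matrix (LIdx I J K) (Fin R) ℝ :=
  Matrix.of fun idx r =>
    PhiMap I J K hI hJ hK (fun i => t.1 i r) (fun j => t.2.1 j r) (fun k => t.2.2 k r) idx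

lemma Mpoly_map (I J K R : ℕ) (hI : 2 ≤ I) (hJ : 2 ≤ J) (hK : 2 ≤ K)
    (u : FlatIdx I J K R → ℝ) :
    (Mpoly I J K R hI hJ hK).map (eval u) = Mmat I J K R hI hJ hK (flatE I J K R u) := by
  ext idx r
  rcases idx with ⟨j, i⟩ | ⟨k, j⟩ | ⟨k, i⟩ | ⟨k, j, i⟩ <;>
    simp [Mpoly, Mmat, PhiMap, flatE, mcurry]

end PhiAux

namespace PhiAux

open Matrix MeasureTheory MvPolynomial

set_option maxHeartbeats 1000000 in
theorem main (I J K R : ℕ)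
    (hI : 2 ≤ I) (hJ : 2 ≤ J) (hK : 2 ≤ K) (hR : 0 < R) :
    MeasureTheory.volume
      {t : (Fin I → Fin R → ℝ) × (Fin J → Fin R → ℝ) × (Fin K → Fin R → ℝ) |
        (Matrix.of fun idx r =>
            PhiMap I J K hI hJ hK (fun i => t.1 i r) (fun j => t.2.1 j r)
              (fun k => t.2.2 k r) idx).rank
          ≠ min (I * J * K - I - J - K + 2) R} = 0 := by
  classical
  have hcard := PhiAux.card_LIdx I J K hI hJ hK
  have hMP := PhiAux.flatE_mp I J K R
  set Psi := PhiAux.flatE I J K R with hPsi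
  set eL := Fintype.equivFin (PhiAux.LIdx I J K) with heL
  rcases le_total R (Fintype.card (PhiAux.LIdx I J K)) with hRL | hLR
  · -- R ≤ ℓ : use the R×R Gram determinant
    set P := ((PhiAux.Mpoly I J K R hI hJ hK)ᵀ * (PhiAux.Mpoly I J K R hI hJ hK)).det with hP
    have hEval : ∀ u, MvPolynomial.eval u P =
        ((PhiAux.Mmat I J K R hI hJ hK (Psi u))ᵀ *
          (PhiAux.Mmat I J K R hI hJ hK (Psi u))).det := by
      intro u
      rw [hP, RingHom.map_det, RingHom.mapMatrix_apply, Matrix.map_mul, Matrix.transpose_map,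
        PhiAux.Mpoly_map I J K R hI hJ hK u]
    set emb : Fin R → PhiAux.LIdx I J K := fun r => eL.symm (Fin.castLE hRL r) with hemb
    have hembInj : Function.Injective emb := fun r s h =>
      Fin.castLE_injective hRL (eL.symm.injective h)
    set t0 : (Fin I → Fin R → ℝ) × (Fin J → Fin R → ℝ) × (Fin K → Fin R → ℝ) :=
      (fun i r => (PhiAux.w I J K (emb r)).1 i,
       fun j r => (PhiAux.w I J K (emb r)).2.1 j,
       fun k r => (PhiAux.w I J K (emb r)).2.2 k) with ht0
    have hM0 : PhiAux.Mmat I J K R hI hJ hK t0 =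
        Matrix.of fun idx r => if idx = emb r then (1 : ℝ) else 0 := by
      ext idx r
      exact PhiAux.phi_w I J K hI hJ hK (emb r) idx
    have hGram : (PhiAux.Mmat I J K R hI hJ hK t0)ᵀ * (PhiAux.Mmat I J K R hI hJ hK t0) = 1 := by
      rw [hM0]
      ext r s
      simp only [Matrix.mul_apply, Matrix.transpose_apply, Matrix.of_apply, Matrix.one_apply]
      rw [Finset.sum_eq_single (emb r)]
      · simp [hembInj.eq_iff]
      · intro b _ hb; simp [hb]
      · simp
    have hne : ∃ u, MvPolynomial.eval u P ≠ 0 := by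
      refine ⟨Psi.symm t0, ?_⟩
      rw [hEval, MeasurableEquiv.apply_symm_apply, hGram, Matrix.det_one]
      norm_num
    have hsub : {t : (Fin I → Fin R → ℝ) × (Fin J → Fin R → ℝ) × (Fin K → Fin R → ℝ) |
        (Matrix.of fun idx r =>
            PhiMap I J K hI hJ hK (fun i => t.1 i r) (fun j => t.2.1 j r)
              (fun k => t.2.2 k r) idx).rank
          ≠ min (I * J * K - I - J - K + 2) R} ⊆
        Psi.symm ⁻¹' {u | MvPolynomial.eval u P = 0} := by
      intro t ht
      simp only [Set.mem_preimage, Set.mem_setOf_eq]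
      by_contra hne0
      apply ht
      have hEv := hEval (Psi.symm t)
      rw [MeasurableEquiv.apply_symm_apply] at hEv
      have hdet : ((PhiAux.Mmat I J K R hI hJ hK t)ᵀ *
          (PhiAux.Mmat I J K R hI hJ hK t)).det ≠ 0 := by
        rw [← hEv]; exact hne0
      have h2 : ((PhiAux.Mmat I J K R hI hJ hK t)ᵀ *
          (PhiAux.Mmat I J K R hI hJ hK t)).rank = Fintype.card (Fin R) :=
        Matrix.rank_of_isUnit _
          ((Matrix.isUnit_iff_isUnit_det _).mpr (isUnit_iff_ne_zero.mpr hdet))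
      have hrank : (PhiAux.Mmat I J K R hI hJ hK t).rank = R := by
        rw [← Matrix.rank_transpose_mul_self, h2, Fintype.card_fin]
      have hmin : min (I * J * K - I - J - K + 2) R = R := by
        rw [← hcard]; exact min_eq_right hRL
      show (Mmat I J K R hI hJ hK t).rank = min (I * J * K - I - J - K + 2) R
      rw [hmin]; exact hrank
    have hZmeas : MeasurableSet {u : PhiAux.FlatIdx I J K R → ℝ | MvPolynomial.eval u P = 0} :=
      (isClosed_eq (PhiAux.cont_eval P) continuous_const).measurableSet
    have hz : MeasureTheory.volume
        {u : PhiAux.FlatIdx I J K R → ℝ | MvPolynomial.eval u P = 0} = 0 :=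
      PhiAux.mvpoly_zero P hne
    refine le_antisymm (le_trans (measure_mono hsub) (le_of_eq ?_)) zero_le
    rw [(MeasurePreserving.symm _ hMP).measure_preimage hZmeas.nullMeasurableSet]
    exact hz
  · -- ℓ ≤ R : use the ℓ×ℓ Gram determinant
    set P := ((PhiAux.Mpoly I J K R hI hJ hK) * (PhiAux.Mpoly I J K R hI hJ hK)ᵀ).det with hP
    have hEval : ∀ u, MvPolynomial.eval u P =
        ((PhiAux.Mmat I J K R hI hJ hK (Psi u)) *
          (PhiAux.Mmat I J K R hI hJ hK (Psi u))ᵀ).det := by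
      intro u
      rw [hP, RingHom.map_det, RingHom.mapMatrix_apply, Matrix.map_mul, Matrix.transpose_map,
        PhiAux.Mpoly_map I J K R hI hJ hK u]
    set emb : PhiAux.LIdx I J K → Fin R := fun b => Fin.castLE hLR (eL b) with hemb
    have hembInj : Function.Injective emb := fun b b' h =>
      eL.injective (Fin.castLE_injective hLR h)
    set cw : Fin R → (Fin I → ℝ) × (Fin J → ℝ) × (Fin K → ℝ) :=
      fun r => if h : ∃ b, emb b = r then PhiAux.w I J K h.choose
        else (fun _ => 0, fun _ => 0, fun _ => 0) with hcw
    set t0 : (Fin I → Fin R → ℝ) × (Fin J → Fin R → ℝ) × (Fin K → Fin R → ℝ) :=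
      (fun i r => (cw r).1 i, fun j r => (cw r).2.1 j, fun k r => (cw r).2.2 k) with ht0
    have hM0 : PhiAux.Mmat I J K R hI hJ hK t0 =
        Matrix.of fun idx r => if r = emb idx then (1 : ℝ) else 0 := by
      ext idx r
      show PhiMap I J K hI hJ hK (cw r).1 (cw r).2.1 (cw r).2.2 idx =
        if r = emb idx then (1 : ℝ) else 0
      by_cases h : ∃ b, emb b = r
      · have hw := h.choose_spec
        rw [hcw]
        simp only [dif_pos h]
        rw [PhiAux.phi_w]
        by_cases hidx : idx = h.choose
        · subst hidx
          rw [if_pos rfl, if_pos hw.symm]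
        · rw [if_neg hidx, if_neg]
          intro hc
          exact hidx (hembInj (by rw [← hc, hw]))
      · rw [hcw]
        simp only [dif_neg h]
        rw [PhiAux.phi_zero, if_neg]
        intro hc
        exact h ⟨idx, hc.symm⟩
    have hGram : (PhiAux.Mmat I J K R hI hJ hK t0) * (PhiAux.Mmat I J K R hI hJ hK t0)ᵀ = 1 := by
      rw [hM0]
      ext b b'
      simp only [Matrix.mul_apply, Matrix.transpose_apply, Matrix.of_apply, Matrix.one_apply]
      rw [Finset.sum_eq_single (emb b)]
      · simp [hembInj.eq_iff]
      · intro r _ hr; simp [hr]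
      · simp
    have hne : ∃ u, MvPolynomial.eval u P ≠ 0 := by
      refine ⟨Psi.symm t0, ?_⟩
      rw [hEval, MeasurableEquiv.apply_symm_apply, hGram, Matrix.det_one]
      norm_num
    have hsub : {t : (Fin I → Fin R → ℝ) × (Fin J → Fin R → ℝ) × (Fin K → Fin R → ℝ) |
        (Matrix.of fun idx r =>
            PhiMap I J K hI hJ hK (fun i => t.1 i r) (fun j => t.2.1 j r)
              (fun k => t.2.2 k r) idx).rank
          ≠ min (I * J * K - I - J - K + 2) R} ⊆
        Psi.symm ⁻¹' {u | MvPolynomial.eval u P = 0} := by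
      intro t ht
      simp only [Set.mem_preimage, Set.mem_setOf_eq]
      by_contra hne0
      apply ht
      have hEv := hEval (Psi.symm t)
      rw [MeasurableEquiv.apply_symm_apply] at hEv
      have hdet : ((PhiAux.Mmat I J K R hI hJ hK t) *
          (PhiAux.Mmat I J K R hI hJ hK t)ᵀ).det ≠ 0 := by
        rw [← hEv]; exact hne0
      have h2 : ((PhiAux.Mmat I J K R hI hJ hK t) *
          (PhiAux.Mmat I J K R hI hJ hK t)ᵀ).rank = Fintype.card (PhiAux.LIdx I J K) :=
        Matrix.rank_of_isUnit _
          ((Matrix.isUnit_iff_isUnit_det _).mpr (isUnit_iff_ne_zero.mpr hdet))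
      have hrank : (PhiAux.Mmat I J K R hI hJ hK t).rank = Fintype.card (PhiAux.LIdx I J K) := by
        rw [← Matrix.rank_self_mul_transpose, h2]
      have hmin : min (I * J * K - I - J - K + 2) R = Fintype.card (LIdx I J K) := by
        rw [← hcard]; exact min_eq_left hLR
      show (Mmat I J K R hI hJ hK t).rank = min (I * J * K - I - J - K + 2) R
      rw [hmin]; exact hrank
    have hZmeas : MeasurableSet {u : PhiAux.FlatIdx I J K R → ℝ | MvPolynomial.eval u P = 0} :=
      (isClosed_eq (PhiAux.cont_eval P) continuous_const).measurableSet
    have hz : MeasureTheory.volume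
        {u : PhiAux.FlatIdx I J K R → ℝ | MvPolynomial.eval u P = 0} = 0 :=
      PhiAux.mvpoly_zero P hne
    refine le_antisymm (le_trans (measure_mono hsub) (le_of_eq ?_)) zero_le
    rw [(MeasurePreserving.symm _ hMP).measure_preimage hZmeas.nullMeasurableSet]
    exact hz

end PhiAux

/-- for generic matrices `X ∈ ℝ^{I×R}`, `Y ∈ ℝ^{J×R}`, `Z ∈ ℝ^{K×R}` with
columns `x_r, y_r, z_r`, the `ℓ × R` matrix `[Φ(x₁,y₁,z₁), …, Φ(x_R,y_R,z_R)]`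
(`ℓ = IJK - I - J - K + 2`) has rank `min ℓ R`: the set of triples `(X, Y, Z)` where
this fails has Lebesgue measure zero. -/
theorem phi_matrix_generic_rank (I J K R : ℕ)
    (hI : 2 ≤ I) (hJ : 2 ≤ J) (hK : 2 ≤ K) (hR : 0 < R) :
    MeasureTheory.volume
      {t : (Fin I → Fin R → ℝ) × (Fin J → Fin R → ℝ) × (Fin K → Fin R → ℝ) |
        (Matrix.of fun idx r =>
            PhiMap I J K hI hJ hK (fun i => t.1 i r) (fun j => t.2.1 j r)
              (fun k => t.2.2 k r) idx).rank
          ≠ min (I * J * K - I - J - K + 2) R} = 0 :=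
  PhiAux.main I J K R hI hJ hK hR
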